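/- For the clique K_n (all arcs (i,j) with i ≠ j) with loops added on all vertices, the maximum number of fixed points of a coding function over an alphabet of size q whose interaction graph is exactly this graph equals q^n − 1. -/
import Mathlib


/-- Arc `(u,i)` of the interaction graph of a coding function `f`. -/
def arcCF {V A : Type*} [DecidableEq V] (f : (V → A) → V → A) (u i : V) : Prop :=
  ∃ (x : V → A) (a : A), f (Function.update x u a) i ≠ f x i

/-- For the clique `K_n` (`n ≥ 2`) with loops added on all vertices, the maximum
number of fixed points of a coding function over an alphabet of size `q ≥ 2` whose
interaction graph is exactly this graph (all arcs present) equals `q^n − 1`. -/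
theorem stmt16 (n q : ℕ) (hn : 2 ≤ n) (hq : 2 ≤ q) :
    sSup {m : ℕ | ∃ f : (Fin n → Fin q) → Fin n → Fin q,
        (∀ u i : Fin n, arcCF f u i) ∧ m = Set.ncard {x | f x = x}} =
      q ^ n - 1 := by
  haveI : NeZero q := ⟨by omega⟩
  have h10 : (1 : Fin q) ≠ 0 := by
    intro h
    have := congrArg Fin.val h
    rw [Fin.val_one'] at this
    simp at this
    omega
  have hcard : Nat.card (Fin n → Fin q) = q ^ n := by
    simp [Nat.card_eq_fintype_card]
  set c0 : Fin n → Fin q := fun _ => 0 with hc0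
  set c1 : Fin n → Fin q := fun _ => 1 with hc1
  have hc10 : c1 ≠ c0 := by
    intro h
    exact h10 (congrFun h ⟨0, by omega⟩)
  classical
  apply IsGreatest.csSup_eq
  constructor
  · -- membership: construct f
    refine ⟨fun x => if x = c0 then c1 else x, ?_, ?_⟩
    · intro u i
      by_cases hui : i = u
      · -- loop: use a point off zero
        subst hui
        obtain ⟨j, hj⟩ : ∃ j : Fin n, j ≠ i := by
          refine ⟨if i = ⟨0, by omega⟩ then ⟨1, by omega⟩ else ⟨0, by omega⟩, ?_⟩
          split <;> simp_all [Fin.ext_iff] <;> omega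
        set x := Function.update c0 j 1 with hx
        have hxne : x ≠ c0 := by
          intro h
          have := congrFun h j
          simp [hx] at this
          exact h10 this
        have hyne : Function.update x i 1 ≠ c0 := by
          intro h
          have := congrFun h j
          simp [hx, Function.update_of_ne hj] at this
          exact h10 this
        refine ⟨x, 1, ?_⟩
        simp only [if_neg hxne, if_neg hyne]
        rw [Function.update_self, hx, Function.update_of_ne (Ne.symm hj)]
        exact h10
      · -- i ≠ u: use the zero point
        have hne : Function.update c0 u 1 ≠ c0 := by
          intro h
          have := congrFun h u
          simp at this
          exact h10 this
        refine ⟨c0, 1, ?_⟩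
        simp only [if_neg hne, if_pos rfl]
        rw [Function.update_of_ne hui]
        exact fun h => h10 h.symm
    · have hset : {x : Fin n → Fin q | (if x = c0 then c1 else x) = x} = {c0}ᶜ := by
        ext x
        by_cases h : x = c0
        · subst h
          simp [hc10]
        · simp [h]
      rw [hset]
      have := Set.ncard_add_ncard_compl ({c0} : Set (Fin n → Fin q))
      rw [Set.ncard_singleton, hcard] at this
      omega
  · -- upper bound
    rintro m ⟨f, hf, rfl⟩
    have hne : {x : Fin n → Fin q | f x = x} ≠ Set.univ := by
      intro h
      have hid : ∀ y, f y = y := fun y => (Set.eq_univ_iff_forall.mp h) y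
      obtain ⟨x, a, hxa⟩ := hf ⟨0, by omega⟩ ⟨1, by omega⟩
      apply hxa
      rw [hid, hid, Function.update_of_ne (by simp [Fin.ext_iff])]
    have hlt : Set.ncard {x : Fin n → Fin q | f x = x} < Nat.card (Fin n → Fin q) := by
      have := Set.ncard_lt_ncard (Set.ssubset_univ_iff.mpr hne) Set.finite_univ
      rwa [Set.ncard_univ] at this
    rw [hcard] at hlt
    omega
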